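/- Let d be a semi-metric on X with no infinitely remote point, and ω ∈ X. Then the metric inversion d_ω(x,y) = d(x,y)/(d(x,ω)d(y,ω)) (with d_ω(x,ω)=∞ for x≠ω) is a semi-metric on X with infinitely remote point ω, and d_ω is Möbius equivalent to d, i.e., has the same cross-ratios on all nondegenerate 4-tuples of points distinct from ω. -/

import Mathlib

open scoped ENNReal Classical

/-- Let `d` be a semi-metric on `X` with no infinitely remote point (so `d`
is finite-valued), and `ω ∈ X`. Then the metric inversion
`d_ω(x,y) = d(x,y)/(d(x,ω)d(y,ω))` (with `d_ω(x,ω) = ∞` for `x ≠ ω`) is a semi-metric on `X`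
with infinitely remote point `ω`, and `d_ω` is Möbius equivalent to `d`: it has the same
cross-ratios on all nondegenerate 4-tuples of points distinct from `ω`. -/
theorem stmt1 {X : Type*} (d : X → X → ℝ)
    (hsymm : ∀ x y, d x y = d y x)
    (hrefl : ∀ x, d x x = 0)
    (hpos : ∀ x y, x ≠ y → 0 < d x y)
    (ω : X) (dω : X → X → ℝ≥0∞)
    (hdω : ∀ x y, dω x y =
      if x = y then 0
      else if x = ω ∨ y = ω then ⊤
      else ENNReal.ofReal (d x y / (d x ω * d y ω))) :
    -- `d_ω` is a semi-metric ...
    (∀ x y, dω x y = dω y x) ∧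
    (∀ x y, dω x y = 0 ↔ x = y) ∧
    -- ... with infinitely remote point `ω` (and no other infinite values):
    (∀ x, x ≠ ω → dω x ω = ⊤) ∧
    (∀ x y, dω x y = ⊤ → x = ω ∨ y = ω) ∧
    -- and `d_ω` is Möbius equivalent to `d`:
    (∀ x y z u : X, x ≠ y → x ≠ z → x ≠ u → y ≠ z → y ≠ u → z ≠ u →
      x ≠ ω → y ≠ ω → z ≠ ω → u ≠ ω →
      (dω x z * dω y u) / (dω x u * dω y z) =
        ENNReal.ofReal ((d x z * d y u) / (d x u * d y z))) := by
  refine ⟨?_, ?_, ?_, ?_, ?_⟩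
  · intro x y
    rw [hdω, hdω, hsymm x y]
    by_cases h : x = y
    · simp [h]
    · rw [if_neg h, if_neg (Ne.symm h)]
      by_cases h2 : x = ω ∨ y = ω
      · rw [if_pos h2, if_pos (or_comm.mp h2)]
      · rw [if_neg h2, if_neg (fun hc => h2 (or_comm.mp hc)), mul_comm]
  · intro x y
    rw [hdω]
    by_cases h : x = y
    · simp [h]
    · rw [if_neg h]
      simp only [h, iff_false]
      by_cases h2 : x = ω ∨ y = ω
      · simp [h2]
      · rw [if_neg h2]
        push_neg at h2
        have := hpos x y h
        have h1 := hpos x ω h2.1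
        have h3 := hpos y ω h2.2
        simp only [ENNReal.ofReal_eq_zero, not_le]
        positivity
  · intro x hx
    rw [hdω]
    simp [hx]
  · intro x y h
    rw [hdω] at h
    by_contra hc
    push_neg at hc
    by_cases hxy : x = y
    · simp [hxy] at h
    · rw [if_neg hxy, if_neg (not_or.mpr hc)] at h
      exact ENNReal.ofReal_ne_top h
  · intro x y z u hxy hxz hxu hyz hyu hzu hx hy hz hu
    have hxo := hpos x ω hx
    have hyo := hpos y ω hy
    have hzo := hpos z ω hz
    have huo := hpos u ω hu
    have hxz' := hpos x z hxz
    have hyu' := hpos y u hyu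
    have hxu' := hpos x u hxu
    have hyz' := hpos y z hyz
    rw [hdω x z, hdω y u, hdω x u, hdω y z]
    rw [if_neg hxz, if_neg (not_or.mpr ⟨hx, hz⟩), if_neg hyu, if_neg (not_or.mpr ⟨hy, hu⟩),
      if_neg hxu, if_neg (not_or.mpr ⟨hx, hu⟩), if_neg hyz, if_neg (not_or.mpr ⟨hy, hz⟩)]
    rw [← ENNReal.ofReal_mul (by positivity), ← ENNReal.ofReal_mul (by positivity),
      ← ENNReal.ofReal_div_of_pos (by positivity)]
    congr 1
    field_simp
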